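/- For perfect complexes of abelian groups X and Y, the canonical map i(RHom(X, Y)) → R\underline{Hom}(iX, iY) from the discrete derived Hom to the internal Hom in the derived category of locally compact abelian groups of finite ranks is an equivalence. -/

import Mathlib

/-!
STATEMENT 13: For perfect complexes of abelian groups `X` and `Y`, the
canonical map `i(RHom(X, Y)) → R𝐻𝑜𝑚(iX, iY)` from the (discrete) derived Hom
to the internal Hom in the derived category of locally compact abelian groups
is an equivalence.

We take `X` a bounded complex of finitely generated free abelian groups and
`Y` a bounded complex of finitely generated abelian groups (every perfect
complex is quasi-isomorphic to such).  Since `X` has (codivisible, discrete)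
projective terms, the internal Hom `R𝐻𝑜𝑚(iX, iY)` is computed as the total
Hom-complex `𝐻𝑜𝑚^•(iX, I)` for any strict quasi-isomorphism `iY → I` with `I`
a bounded complex of divisible locally compact abelian groups (e.g.
`I = Tot[Y ⊗ ℝ → Y ⊗ ℝ/ℤ]`); as `X` is degreewise discrete, continuous
homomorphisms out of `X` are just homomorphisms.  The statement: the
postcomposition map `Hom^•(X, Y) → Hom^•(iX, I)` is a quasi-isomorphism.
-/

section Machinery

/-- Transport along an equality of indices. -/
def castGrpHom {F : ℤ → Type} [∀ i, AddCommGroup (F i)] {a b : ℤ} (h : a = b) :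
    F a →+ F b := by subst h; exact AddMonoidHom.id _

variable {F G : ℤ → Type} [∀ i, AddCommGroup (F i)] [∀ i, AddCommGroup (G i)]

/-- The degree `n` cohomology `Ker(d^n)/Im(d^{n-1})` of a `ℤ`-indexed complex. -/
def Hdeg (d : ∀ n : ℤ, F n →+ F (n + 1)) (n : ℤ) : Type :=
  (d n).ker ⧸ ((((castGrpHom (F := F) (show n - 1 + 1 = n by omega)).comp
    (d (n - 1))).range).addSubgroupOf (d n).ker)

noncomputable instance (d : ∀ n : ℤ, F n →+ F (n + 1)) (n : ℤ) :
    AddCommGroup (Hdeg d n) := by unfold Hdeg; infer_instance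

/-- The map induced on degree `n` cohomology by a chain map. -/
noncomputable def HdegMap (d : ∀ n : ℤ, F n →+ F (n + 1))
    (d' : ∀ n : ℤ, G n →+ G (n + 1)) (f : ∀ n, F n →+ G n)
    (hf : ∀ n x, f (n + 1) (d n x) = d' n (f n x)) (n : ℤ) :
    Hdeg d n → Hdeg d' n := by
  have cast_nat : ∀ {a b : ℤ} (h : a = b) (x : F a),
      f b (castGrpHom (F := F) h x) = castGrpHom (F := G) h (f a x) := by
    intro a b h x; subst h; rfl
  refine Quotient.map' (fun x => ⟨f n x.1, ?_⟩) ?_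
  · have : (d' n) (f n x.1) = f (n + 1) (d n x.1) := (hf n x.1).symm
    simp only [AddMonoidHom.mem_ker, this]
    rw [show (d n) x.1 = 0 from x.2, map_zero]
  · rintro ⟨b, hb⟩ ⟨b', hb'⟩ hrel
    have hmem := QuotientAddGroup.leftRel_apply.mp hrel
    apply QuotientAddGroup.leftRel_apply.mpr
    obtain ⟨a, ha⟩ := (AddSubgroup.mem_addSubgroupOf).mp hmem
    apply AddSubgroup.mem_addSubgroupOf.mpr
    refine ⟨f (n - 1) a, ?_⟩
    have h2 := congrArg (f n) ha
    simp only [AddMonoidHom.comp_apply, cast_nat, hf, AddSubgroup.coe_add,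
      AddSubgroup.coe_neg, map_add, map_neg] at h2 ⊢
    exact h2

end Machinery

section HomComplexes

variable (X Y : ℤ → Type) [∀ i, AddCommGroup (X i)] [∀ i, AddCommGroup (Y i)]

/-- The degree `n` term `∏ᵢ Hom(Xⁱ, Y^{i+n})` of the Hom-complex. -/
abbrev HomT (n : ℤ) : Type := ∀ i : ℤ, X i →+ Y (i + n)

variable (dX : ∀ i : ℤ, X i →+ X (i + 1)) (dY : ∀ i : ℤ, Y i →+ Y (i + 1))

/-- The differential of the Hom-complex:
`(Dφ)ᵢ = d_Y ∘ φᵢ − (−1)ⁿ φ_{i+1} ∘ d_X`. -/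
noncomputable def HomD (n : ℤ) : HomT X Y n →+ HomT X Y (n + 1) :=
  AddMonoidHom.mk'
    (fun φ i =>
      (castGrpHom (F := Y) (show i + n + 1 = i + (n + 1) by omega)).comp
        ((dY (i + n)).comp (φ i)) -
      (n.negOnePow : ℤ) •
        ((castGrpHom (F := Y) (show i + 1 + n = i + (n + 1) by omega)).comp
          ((φ (i + 1)).comp (dX i))))
    (by
      intro φ ψ
      funext i
      ext x
      simp only [AddMonoidHom.sub_apply, AddMonoidHom.comp_apply,
        AddMonoidHom.add_apply, Pi.add_apply, map_add, smul_add,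
        AddMonoidHom.smul_apply]
      abel)

end HomComplexes
section Aux13
namespace S13

variable {F G : ℤ → Type} [∀ i, AddCommGroup (F i)] [∀ i, AddCommGroup (G i)]

@[simp] lemma cg_self {a : ℤ} (h : a = a) (x : F a) : castGrpHom (F := F) h x = x := rfl

lemma cg_cg {a b c : ℤ} (h : a = b) (h' : b = c) (hc : a = c) (x : F a) :
    castGrpHom (F := F) h' (castGrpHom (F := F) h x) = castGrpHom (F := F) hc x := by
  subst h; subst h'; rfl

lemma eq_cg_symm {a b : ℤ} (h : a = b) {x : F a} {y : F b} :
    castGrpHom (F := F) h x = y ↔ x = castGrpHom (F := F) h.symm y := by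
  subst h; exact Iff.rfl

lemma d_cg (d : ∀ i : ℤ, F i →+ F (i + 1)) {a b : ℤ} (h : a = b) (h' : a + 1 = b + 1) (x : F a) :
    d b (castGrpHom (F := F) h x) = castGrpHom (F := F) h' (d a x) := by
  subst h; rfl

lemma t_cg (t : ∀ i : ℤ, F i →+ G i) {a b : ℤ} (h : a = b) (x : F a) :
    t b (castGrpHom (F := F) h x) = castGrpHom (F := G) h (t a x) := by
  subst h; rfl

lemma hdeg_mk_eq (d : ∀ n : ℤ, F n →+ F (n + 1)) (n : ℤ) (x y : (d n).ker) :
    @Eq (Hdeg d n) (QuotientAddGroup.mk x) (QuotientAddGroup.mk y) ↔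
      ∃ a : F (n - 1), castGrpHom (F := F) (show n - 1 + 1 = n by omega) (d (n - 1) a)
        = -x.1 + y.1 := by
  unfold Hdeg
  rw [QuotientAddGroup.eq, AddSubgroup.mem_addSubgroupOf]
  simp [AddMonoidHom.mem_range, AddMonoidHom.comp_apply]

lemma HdegMap_mk (d : ∀ n : ℤ, F n →+ F (n + 1))
    (d' : ∀ n : ℤ, G n →+ G (n + 1)) (f : ∀ n, F n →+ G n)
    (hf : ∀ n x, f (n + 1) (d n x) = d' n (f n x)) (n : ℤ)
    (x : (d n).ker) (h : f n x.1 ∈ (d' n).ker) :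
    HdegMap d d' f hf n (QuotientAddGroup.mk x) = QuotientAddGroup.mk ⟨f n x.1, h⟩ := by
  unfold HdegMap
  exact Quotient.map'_mk'' _ _ _

lemma addHom_ext_basis {M W : Type*} [AddCommGroup M] [AddCommGroup W] {κ : Type*}
    (b : Module.Basis κ ℤ M) {f g : M →+ W} (h : ∀ e, f (b e) = g (b e)) : f = g := by
  have H : f.toIntLinearMap = g.toIntLinearMap := b.ext h
  ext x
  exact DFunLike.congr_fun H x

end S13
end Aux13
section Aux13b
namespace S13

variable {X Y I : ℤ → Type} [∀ i, AddCommGroup (X i)] [∀ i, AddCommGroup (Y i)]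
  [∀ i, AddCommGroup (I i)]
variable (dX : ∀ i : ℤ, X i →+ X (i + 1)) (dY : ∀ i : ℤ, Y i →+ Y (i + 1))
  (dI : ∀ i : ℤ, I i →+ I (i + 1)) (ι : ∀ i, Y i →+ I i)

lemma homD_apply (n : ℤ) (φ : HomT X Y n) (i : ℤ) (x : X i) :
    HomD X Y dX dY n φ i x =
      castGrpHom (F := Y) (show i + n + 1 = i + (n + 1) by omega) (dY (i + n) (φ i x))
      - (n.negOnePow : ℤ) •
        castGrpHom (F := Y) (show i + 1 + n = i + (n + 1) by omega) (φ (i + 1) (dX i x)) :=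
  rfl

lemma HomD_cg {a b : ℤ} (h : a = b) (h' : a + 1 = b + 1) (φ : HomT X Y a) :
    HomD X Y dX dY b (castGrpHom (F := HomT X Y) h φ)
      = castGrpHom (F := HomT X Y) h' (HomD X Y dX dY a φ) := by
  subst h; rfl

lemma cgHomT_apply {a b : ℤ} (h : a = b) (h' : ∀ i : ℤ, i + a = i + b) (φ : HomT X Y a)
    (i : ℤ) (x : X i) :
    (castGrpHom (F := HomT X Y) h φ) i x = castGrpHom (F := Y) (h' i) (φ i x) := by
  subst h; rfl

/-- The postcomposition map, as a bare function. -/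
def f0 (n : ℤ) (ψ : HomT X Y n) : HomT X I n := fun j => (ι (j + n)).comp (ψ j)

lemma f0_cg {a b : ℤ} (h : a = b) (ψ : HomT X Y a) :
    f0 ι b (castGrpHom (F := HomT X Y) h ψ)
      = castGrpHom (F := HomT X I) h (f0 ι a ψ) := by
  subst h; rfl

lemma f0_zero (n : ℤ) : f0 ι n (0 : HomT X Y n) = 0 := by
  funext j; ext x; simp [f0]

lemma f0_apply (n : ℤ) (ψ : HomT X Y n) (j : ℤ) (x : X j) :
    f0 ι n ψ j x = ι (j + n) (ψ j x) := rfl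

/-- Elementwise invariant: component `i` of `HomD u = A`. -/
abbrev PA (n : ℤ) (A : HomT X Y (n + 1)) (u : HomT X Y n) (i : ℤ) : Prop :=
  ∀ x : X i,
    castGrpHom (F := Y) (show i + n + 1 = i + (n + 1) by omega) (dY (i + n) (u i x))
    - (n.negOnePow : ℤ) •
      castGrpHom (F := Y) (show i + 1 + n = i + (n + 1) by omega) (u (i + 1) (dX i x))
    = A i x

/-- Elementwise invariant: component `i` of `f0 u + cast (HomD v) = B`. -/
abbrev PB (n : ℤ) (B : HomT X I n) (u : HomT X Y n) (v : HomT X I (n - 1)) (i : ℤ) : Prop :=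
  ∀ x : X i,
    ι (i + n) (u i x)
    + castGrpHom (F := I) (show i + (n - 1) + 1 = i + n by omega) (dI (i + (n - 1)) (v i x))
    - ((n - 1).negOnePow : ℤ) •
      castGrpHom (F := I) (show i + 1 + (n - 1) = i + n by omega) (v (i + 1) (dX i x))
    = B i x

lemma PA_triv {n : ℤ} {A : HomT X Y (n + 1)} {u : HomT X Y n} {i : ℤ}
    (hs : Subsingleton (X i)) : PA dX dY n A u i := by
  intro x
  rw [Subsingleton.elim x 0]
  simp

lemma PB_triv {n : ℤ} {B : HomT X I n} {u : HomT X Y n} {v : HomT X I (n - 1)} {i : ℤ}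
    (hs : Subsingleton (X i)) : PB dX dI ι n B u v i := by
  intro x
  rw [Subsingleton.elim x 0]
  simp

lemma homD_eq_iff (n : ℤ) (u : HomT X Y n) (A : HomT X Y (n + 1)) :
    HomD X Y dX dY n u = A ↔ ∀ i, PA dX dY n A u i := by
  constructor
  · intro h i x
    exact (homD_apply dX dY n u i x).symm.trans (DFunLike.congr_fun (congrFun h i) x)
  · intro h
    funext i; ext x
    exact (homD_apply dX dY n u i x).trans (h i x)

lemma HA_of {n : ℤ} {A : HomT X Y (n + 1)} (hA : HomD X Y dX dY (n + 1) A = 0) :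
    ∀ (i : ℤ) (x : X i),
      castGrpHom (F := Y) (show i + (n + 1) + 1 = i + (n + 1 + 1) by omega)
          (dY (i + (n + 1)) (A i x))
        = ((n + 1).negOnePow : ℤ) •
          castGrpHom (F := Y) (show i + 1 + (n + 1) = i + (n + 1 + 1) by omega)
            (A (i + 1) (dX i x)) := by
  intro i x
  have h := (homD_apply dX dY (n + 1) A i x).symm.trans (DFunLike.congr_fun (congrFun hA i) x)
  exact sub_eq_zero.mp h

lemma HB_of {n : ℤ} {A : HomT X Y (n + 1)} {B : HomT X I n}
    (hB : HomD X I dX dI n B = f0 ι (n + 1) A) :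
    ∀ (i : ℤ) (x : X i),
      castGrpHom (F := I) (show i + n + 1 = i + (n + 1) by omega) (dI (i + n) (B i x))
      - (n.negOnePow : ℤ) •
        castGrpHom (F := I) (show i + 1 + n = i + (n + 1) by omega) (B (i + 1) (dX i x))
      = ι (i + (n + 1)) (A i x) := by
  intro i x
  exact (homD_apply dX dI n B i x).symm.trans (DFunLike.congr_fun (congrFun hB i) x)

lemma PB_global {n : ℤ} {B : HomT X I n} {u : HomT X Y n} {v : HomT X I (n - 1)}
    (h : ∀ i, PB dX dI ι n B u v i) :
    f0 ι n u + castGrpHom (F := HomT X I) (show n - 1 + 1 = n by omega)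
      (HomD X I dX dI (n - 1) v) = B := by
  funext i; ext x
  have e1 : (f0 ι n u + castGrpHom (F := HomT X I) (show n - 1 + 1 = n by omega)
      (HomD X I dX dI (n - 1) v)) i x
      = f0 ι n u i x + (castGrpHom (F := HomT X I) (show n - 1 + 1 = n by omega)
        (HomD X I dX dI (n - 1) v)) i x := rfl
  rw [e1, cgHomT_apply (h' := fun i => by omega), homD_apply]
  rw [map_sub, map_zsmul, cg_cg _ _ (show i + (n - 1) + 1 = i + n by omega),
    cg_cg _ _ (show i + 1 + (n - 1) = i + n by omega)]
  have := h i x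
  rw [f0_apply]
  rw [← this]
  abel

end S13
end Aux13b
section Aux13c
namespace S13

variable {Y I : ℤ → Type} [∀ i, AddCommGroup (Y i)] [∀ i, AddCommGroup (I i)]
variable (dY : ∀ i : ℤ, Y i →+ Y (i + 1)) (dI : ∀ i : ℤ, I i →+ I (i + 1))
  (ι : ∀ i, Y i →+ I i)

/-- Acyclicity of the cone of a quasi-isomorphism, elementwise form. -/
lemma lemA (hιchain : ∀ i y, ι (i + 1) (dY i y) = dI i (ι i y))
    (hιq : ∀ t, Function.Bijective (HdegMap dY dI ι hιchain t))
    (s : ℤ) (y : Y (s + 1)) (hy : dY (s + 1) y = 0) (z : I s) (hz : dI s z = ι (s + 1) y) :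
    ∃ (y' : Y s) (z' : I (s - 1)), dY s y' = y ∧
      ι s y' + castGrpHom (F := I) (show s - 1 + 1 = s by omega) (dI (s - 1) z') = z := by
  have hyk : y ∈ (dY (s + 1)).ker := hy
  have hιyk : ι (s + 1) y ∈ (dI (s + 1)).ker := by
    show dI (s + 1) (ι (s + 1) y) = 0
    rw [← hιchain (s + 1) y, hy, map_zero]
  have h0k : (0 : Y (s + 1)) ∈ (dY (s + 1)).ker := by simp [AddMonoidHom.mem_ker]
  have hι0k : ι (s + 1) ((0 : (dY (s+1)).ker) : Y (s + 1)) ∈ (dI (s + 1)).ker := by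
    simp [AddMonoidHom.mem_ker]
  -- Step 1: the class of y dies in H(I), hence (injectivity) y is a boundary
  have h1 : HdegMap dY dI ι hιchain (s + 1) (QuotientAddGroup.mk ⟨y, hyk⟩)
      = HdegMap dY dI ι hιchain (s + 1) (QuotientAddGroup.mk 0) := by
    rw [HdegMap_mk (h := hιyk), HdegMap_mk (h := hι0k), hdeg_mk_eq]
    refine ⟨castGrpHom (F := I) (show s = s + 1 - 1 by omega) (-z), ?_⟩
    rw [d_cg dI (show s = s + 1 - 1 by omega) (show s + 1 = s + 1 - 1 + 1 by omega),
      cg_cg _ _ (show s + 1 = s + 1 by omega), cg_self, map_neg, hz]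
    simp
  have h2 : @Eq (Hdeg dY (s + 1)) (QuotientAddGroup.mk (⟨y, hyk⟩ : (dY (s+1)).ker))
      (QuotientAddGroup.mk 0) := (hιq (s + 1)).1 h1
  rw [hdeg_mk_eq] at h2
  obtain ⟨w, hw⟩ := h2
  -- y₀ := cast (-w) satisfies dY s y₀ = y
  set y₀ : Y s := castGrpHom (F := Y) (show s + 1 - 1 = s by omega) (-w) with hy₀
  have hdy₀ : dY s y₀ = y := by
    rw [hy₀, d_cg dY (show s + 1 - 1 = s by omega) (show s + 1 - 1 + 1 = s + 1 by omega),
      map_neg, map_neg, hw]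
    simp
  -- Step 2: z - ι y₀ is a cocycle in I, hence (surjectivity) ι-image of a cocycle + boundary
  have hwk : z - ι s y₀ ∈ (dI s).ker := by
    show dI s (z - ι s y₀) = 0
    rw [map_sub, hz, ← hιchain s y₀, hdy₀, sub_self]
  obtain ⟨c, hc⟩ := (hιq s).2 (QuotientAddGroup.mk ⟨z - ι s y₀, hwk⟩)
  obtain ⟨yc, rfl⟩ := QuotientAddGroup.mk_surjective c
  have hιyck : ι s (yc : Y s) ∈ (dI s).ker := by
    show dI s (ι s yc) = 0
    rw [← hιchain s yc, show dY s (yc : Y s) = 0 from yc.2, map_zero]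
  rw [HdegMap_mk (h := hιyck), hdeg_mk_eq] at hc
  obtain ⟨zz, hzz⟩ := hc
  refine ⟨y₀ + yc, zz, ?_, ?_⟩
  · rw [map_add, hdy₀, show dY s (yc : Y s) = 0 from yc.2, add_zero]
  · rw [map_add, hzz]
    push_cast
    abel

end S13
end Aux13c
section Aux13d
namespace S13

variable {X Y I : ℤ → Type} [∀ i, AddCommGroup (X i)] [∀ i, AddCommGroup (Y i)]
  [∀ i, AddCommGroup (I i)]
variable (dX : ∀ i : ℤ, X i →+ X (i + 1)) (dY : ∀ i : ℤ, Y i →+ Y (i + 1))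
  (dI : ∀ i : ℤ, I i →+ I (i + 1)) (ι : ∀ i, Y i →+ I i)

lemma negOnePow_succ_coe (n : ℤ) : (((n + 1).negOnePow : ℤˣ) : ℤ) = -((n.negOnePow : ℤˣ) : ℤ) := by
  rw [Int.negOnePow_succ, Units.val_neg]

lemma negOnePow_pred_coe (n : ℤ) : (((n - 1).negOnePow : ℤˣ) : ℤ) = -((n.negOnePow : ℤˣ) : ℤ) := by
  have h := Int.negOnePow_succ (n - 1)
  rw [sub_add_cancel] at h
  rw [h, Units.val_neg, neg_neg]

lemma stepEx
    (hXc : ∀ i x, dX (i + 1) (dX i x) = 0)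
    (hXfree : ∀ i, Module.Free ℤ (X i))
    (hιchain : ∀ i y, ι (i + 1) (dY i y) = dI i (ι i y))
    (hιq : ∀ t, Function.Bijective (HdegMap dY dI ι hιchain t))
    (n : ℤ) (A : HomT X Y (n + 1)) (B : HomT X I n)
    (hA : ∀ (i : ℤ) (x : X i),
      castGrpHom (F := Y) (show i + (n + 1) + 1 = i + (n + 1 + 1) by omega)
          (dY (i + (n + 1)) (A i x))
        = ((n + 1).negOnePow : ℤ) •
          castGrpHom (F := Y) (show i + 1 + (n + 1) = i + (n + 1 + 1) by omega)
            (A (i + 1) (dX i x)))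
    (hB : ∀ (i : ℤ) (x : X i),
      castGrpHom (F := I) (show i + n + 1 = i + (n + 1) by omega) (dI (i + n) (B i x))
      - (n.negOnePow : ℤ) •
        castGrpHom (F := I) (show i + 1 + n = i + (n + 1) by omega) (B (i + 1) (dX i x))
      = ι (i + (n + 1)) (A i x))
    (m : ℤ) (u : HomT X Y n) (v : HomT X I (n - 1))
    (hu : PA dX dY n A u (m + 1)) (hv : PB dX dI ι n B u v (m + 1)) :
    ∃ (w : X m →+ Y (m + n)) (z : X m →+ I (m + (n - 1))),
      (∀ x : X m,
        castGrpHom (F := Y) (show m + n + 1 = m + (n + 1) by omega) (dY (m + n) (w x))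
        - (n.negOnePow : ℤ) •
          castGrpHom (F := Y) (show m + 1 + n = m + (n + 1) by omega) (u (m + 1) (dX m x))
        = A m x)
      ∧ (∀ x : X m,
        ι (m + n) (w x)
        + castGrpHom (F := I) (show m + (n - 1) + 1 = m + n by omega)
            (dI (m + (n - 1)) (z x))
        - ((n - 1).negOnePow : ℤ) •
          castGrpHom (F := I) (show m + 1 + (n - 1) = m + n by omega) (v (m + 1) (dX m x))
        = B m x) := by
  -- pointwise consequences of the hypotheses
  have hdA : ∀ x : X m, dY (m + (n + 1)) (A m x)
      = ((n + 1).negOnePow : ℤ) •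
        castGrpHom (F := Y) (show m + 1 + (n + 1) = m + (n + 1) + 1 by omega)
          (A (m + 1) (dX m x)) := by
    intro x
    have h := hA m x
    rw [eq_cg_symm] at h
    rw [h, map_zsmul, cg_cg _ _ (show m + 1 + (n + 1) = m + (n + 1) + 1 by omega)]
  have hdu : ∀ x : X m, dY (m + 1 + n) (u (m + 1) (dX m x))
      = castGrpHom (F := Y) (show m + 1 + (n + 1) = m + 1 + n + 1 by omega)
          (A (m + 1) (dX m x)) := by
    intro x
    have h := hu (dX m x)
    rw [hXc m x, map_zero, map_zero, smul_zero, sub_zero, eq_cg_symm] at h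
    exact h
  have hdB : ∀ x : X m, dI (m + n) (B m x)
      = castGrpHom (F := I) (show m + (n + 1) = m + n + 1 by omega) (ι (m + (n + 1)) (A m x))
        + (n.negOnePow : ℤ) •
          castGrpHom (F := I) (show m + 1 + n = m + n + 1 by omega) (B (m + 1) (dX m x)) := by
    intro x
    have h := hB m x
    rw [sub_eq_iff_eq_add, eq_cg_symm] at h
    rw [h, map_add, map_zsmul, cg_cg _ _ (show m + 1 + n = m + n + 1 by omega)]
  have hdv : ∀ x : X m, dI (m + 1 + (n - 1)) (v (m + 1) (dX m x))
      = castGrpHom (F := I) (show m + 1 + n = m + 1 + (n - 1) + 1 by omega)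
          (B (m + 1) (dX m x) - ι (m + 1 + n) (u (m + 1) (dX m x))) := by
    intro x
    have h := hv (dX m x)
    rw [hXc m x, map_zero, map_zero, smul_zero, sub_zero] at h
    have h' := eq_sub_of_add_eq' h
    rw [eq_cg_symm] at h'
    exact h'
  -- the cocycle of the cone
  have hy : ∀ x : X m, dY (m + n + 1)
      (castGrpHom (F := Y) (show m + (n + 1) = m + n + 1 by omega) (A m x)
        + (n.negOnePow : ℤ) •
          castGrpHom (F := Y) (show m + 1 + n = m + n + 1 by omega) (u (m + 1) (dX m x))) = 0 := by
    intro x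
    rw [map_add, map_zsmul,
      d_cg dY (show m + (n + 1) = m + n + 1 by omega) (show m + (n + 1) + 1 = m + n + 1 + 1 by omega),
      d_cg dY (show m + 1 + n = m + n + 1 by omega) (show m + 1 + n + 1 = m + n + 1 + 1 by omega),
      hdA x, hdu x, map_zsmul,
      cg_cg _ _ (show m + 1 + (n + 1) = m + n + 1 + 1 by omega),
      cg_cg _ _ (show m + 1 + (n + 1) = m + n + 1 + 1 by omega),
      negOnePow_succ_coe, neg_smul]
    exact neg_add_cancel _
  have hz : ∀ x : X m, dI (m + n)
      (B m x + (-(n.negOnePow : ℤ)) •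
        castGrpHom (F := I) (show m + 1 + (n - 1) = m + n by omega) (v (m + 1) (dX m x)))
      = ι (m + n + 1)
        (castGrpHom (F := Y) (show m + (n + 1) = m + n + 1 by omega) (A m x)
          + (n.negOnePow : ℤ) •
            castGrpHom (F := Y) (show m + 1 + n = m + n + 1 by omega) (u (m + 1) (dX m x))) := by
    intro x
    rw [map_add, map_zsmul, hdB x,
      d_cg dI (show m + 1 + (n - 1) = m + n by omega) (show m + 1 + (n - 1) + 1 = m + n + 1 by omega),
      hdv x, cg_cg _ _ (show m + 1 + n = m + n + 1 by omega),
      map_add, map_zsmul, t_cg ι (show m + (n + 1) = m + n + 1 by omega),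
      t_cg ι (show m + 1 + n = m + n + 1 by omega),
      map_sub, neg_smul, smul_sub, neg_sub]
    abel
  -- choose lifts on a basis
  haveI := hXfree m
  let bas := Module.Free.chooseBasis ℤ (X m)
  choose wv zv hw1 hw2 using fun e =>
    lemA dY dI ι hιchain hιq (m + n) _ (hy (bas e)) _ (hz (bas e))
  refine ⟨(bas.constr ℤ wv).toAddMonoidHom,
    (bas.constr ℤ (fun e =>
      castGrpHom (F := I) (show m + n - 1 = m + (n - 1) by omega) (zv e))).toAddMonoidHom,
    ?_, ?_⟩
  · -- first equation
    have E1 : (castGrpHom (F := Y) (show m + n + 1 = m + (n + 1) by omega)).comp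
        ((dY (m + n)).comp (bas.constr ℤ wv).toAddMonoidHom)
      - (n.negOnePow : ℤ) •
        ((castGrpHom (F := Y) (show m + 1 + n = m + (n + 1) by omega)).comp
          ((u (m + 1)).comp (dX m))) = A m := by
      apply addHom_ext_basis bas
      intro e
      simp only [AddMonoidHom.sub_apply, AddMonoidHom.smul_apply, AddMonoidHom.comp_apply,
        LinearMap.toAddMonoidHom_coe, Module.Basis.constr_basis]
      rw [hw1 e, map_add, map_zsmul,
        cg_cg _ _ (show m + (n + 1) = m + (n + 1) by omega), cg_self,
        cg_cg _ _ (show m + 1 + n = m + (n + 1) by omega)]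
      exact add_sub_cancel_right _ _
    intro x
    have := DFunLike.congr_fun E1 x
    simpa only [AddMonoidHom.sub_apply, AddMonoidHom.smul_apply, AddMonoidHom.comp_apply]
      using this
  · -- second equation
    have E2 : (ι (m + n)).comp (bas.constr ℤ wv).toAddMonoidHom
      + (castGrpHom (F := I) (show m + (n - 1) + 1 = m + n by omega)).comp
          ((dI (m + (n - 1))).comp (bas.constr ℤ (fun e =>
            castGrpHom (F := I) (show m + n - 1 = m + (n - 1) by omega) (zv e))).toAddMonoidHom)
      - ((n - 1).negOnePow : ℤ) •
        ((castGrpHom (F := I) (show m + 1 + (n - 1) = m + n by omega)).comp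
          ((v (m + 1)).comp (dX m))) = B m := by
      apply addHom_ext_basis bas
      intro e
      simp only [AddMonoidHom.sub_apply, AddMonoidHom.add_apply, AddMonoidHom.smul_apply,
        AddMonoidHom.comp_apply, LinearMap.toAddMonoidHom_coe, Module.Basis.constr_basis]
      rw [d_cg dI (show m + n - 1 = m + (n - 1) by omega)
          (show m + n - 1 + 1 = m + (n - 1) + 1 by omega),
        cg_cg _ _ (show m + n - 1 + 1 = m + n by omega),
        hw2 e, negOnePow_pred_coe, neg_smul]
      abel
    intro x
    have := DFunLike.congr_fun E2 x
    simpa only [AddMonoidHom.sub_apply, AddMonoidHom.add_apply, AddMonoidHom.smul_apply,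
      AddMonoidHom.comp_apply] using this

end S13
end Aux13d
section Aux13e
namespace S13

variable {X Y I : ℤ → Type} [∀ i, AddCommGroup (X i)] [∀ i, AddCommGroup (Y i)]
  [∀ i, AddCommGroup (I i)]
variable (dX : ∀ i : ℤ, X i →+ X (i + 1)) (dY : ∀ i : ℤ, Y i →+ Y (i + 1))
  (dI : ∀ i : ℤ, I i →+ I (i + 1)) (ι : ∀ i, Y i →+ I i)

lemma exFam
    (hXc : ∀ i x, dX (i + 1) (dX i x) = 0)
    (hXb : ∃ a b : ℤ, ∀ i, (i < a ∨ b < i) → Subsingleton (X i))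
    (hXfree : ∀ i, Module.Free ℤ (X i))
    (hιchain : ∀ i y, ι (i + 1) (dY i y) = dI i (ι i y))
    (hιq : ∀ t, Function.Bijective (HdegMap dY dI ι hιchain t))
    (n : ℤ) (A : HomT X Y (n + 1)) (B : HomT X I n)
    (hA : ∀ (i : ℤ) (x : X i),
      castGrpHom (F := Y) (show i + (n + 1) + 1 = i + (n + 1 + 1) by omega)
          (dY (i + (n + 1)) (A i x))
        = ((n + 1).negOnePow : ℤ) •
          castGrpHom (F := Y) (show i + 1 + (n + 1) = i + (n + 1 + 1) by omega)
            (A (i + 1) (dX i x)))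
    (hB : ∀ (i : ℤ) (x : X i),
      castGrpHom (F := I) (show i + n + 1 = i + (n + 1) by omega) (dI (i + n) (B i x))
      - (n.negOnePow : ℤ) •
        castGrpHom (F := I) (show i + 1 + n = i + (n + 1) by omega) (B (i + 1) (dX i x))
      = ι (i + (n + 1)) (A i x)) :
    ∃ (u : HomT X Y n) (v : HomT X I (n - 1)),
      ∀ i, PA dX dY n A u i ∧ PB dX dI ι n B u v i := by
  obtain ⟨a, b, hab⟩ := hXb
  have main : ∀ k : ℕ, ∃ (u : HomT X Y n) (v : HomT X I (n - 1)),
      ∀ i, b - k < i → (PA dX dY n A u i ∧ PB dX dI ι n B u v i) := by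
    intro k
    induction k with
    | zero =>
      refine ⟨0, 0, fun i hi => ?_⟩
      have hs : Subsingleton (X i) := hab i (Or.inr (by simpa using hi))
      exact ⟨PA_triv dX dY hs, PB_triv dX dI ι hs⟩
    | succ k ih =>
      obtain ⟨u, v, hk⟩ := ih
      obtain ⟨w, z, hw, hz⟩ := stepEx dX dY dI ι hXc hXfree hιchain hιq n A B hA hB (b - k)
        u v (hk (b - k + 1) (by omega)).1 (hk (b - k + 1) (by omega)).2
      refine ⟨Function.update u (b - k) w, Function.update v (b - k) z, fun i hi => ?_⟩
      have hcase : i = b - k ∨ b - k < i := by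
        push_cast at hi
        omega
      rcases hcase with hcase | hcase
      · subst hcase
        constructor
        · intro x
          rw [Function.update_self, Function.update_of_ne (by omega : b - k + 1 ≠ b - k)]
          exact hw x
        · intro x
          rw [Function.update_self, Function.update_self,
            Function.update_of_ne (by omega : b - k + 1 ≠ b - k)]
          exact hz x
      · constructor
        · intro x
          rw [Function.update_of_ne (by omega : i ≠ b - k),
            Function.update_of_ne (by omega : i + 1 ≠ b - k)]
          exact (hk i hcase).1 x
        · intro x
          rw [Function.update_of_ne (by omega : i ≠ b - k),
            Function.update_of_ne (by omega : i ≠ b - k),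
            Function.update_of_ne (by omega : i + 1 ≠ b - k)]
          exact (hk i hcase).2 x
  obtain ⟨u, v, h⟩ := main (b + 1 - a).toNat
  refine ⟨u, v, fun i => ?_⟩
  by_cases hcase : b - ((b + 1 - a).toNat : ℤ) < i
  · exact h i hcase
  · have hs : Subsingleton (X i) := by
      apply hab i
      left
      have := Int.self_le_toNat (b + 1 - a)
      omega
    exact ⟨PA_triv dX dY hs, PB_triv dX dI ι hs⟩

end S13
end Aux13e
section Aux13f
namespace S13

variable {X Y I : ℤ → Type} [∀ i, AddCommGroup (X i)] [∀ i, AddCommGroup (Y i)]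
  [∀ i, AddCommGroup (I i)]
variable (dX : ∀ i : ℤ, X i →+ X (i + 1)) (dY : ∀ i : ℤ, Y i →+ Y (i + 1))
  (dI : ∀ i : ℤ, I i →+ I (i + 1)) (ι : ∀ i, Y i →+ I i)

lemma ML
    (hXc : ∀ i x, dX (i + 1) (dX i x) = 0)
    (hXb : ∃ a b : ℤ, ∀ i, (i < a ∨ b < i) → Subsingleton (X i))
    (hXfree : ∀ i, Module.Free ℤ (X i))
    (hιchain : ∀ i y, ι (i + 1) (dY i y) = dI i (ι i y))
    (hιq : ∀ t, Function.Bijective (HdegMap dY dI ι hιchain t))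
    (n : ℤ) (A : HomT X Y (n + 1)) (B : HomT X I n)
    (hA : HomD X Y dX dY (n + 1) A = 0)
    (hB : HomD X I dX dI n B = f0 ι (n + 1) A) :
    ∃ (u : HomT X Y n) (v : HomT X I (n - 1)),
      HomD X Y dX dY n u = A ∧
      f0 ι n u + castGrpHom (F := HomT X I) (show n - 1 + 1 = n by omega)
        (HomD X I dX dI (n - 1) v) = B := by
  obtain ⟨u, v, h⟩ := exFam dX dY dI ι hXc hXb hXfree hιchain hιq n A B
    (HA_of dX dY hA) (HB_of dX dI ι hB)
  exact ⟨u, v, (homD_eq_iff dX dY n u A).mpr (fun i => (h i).1),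
    PB_global dX dI ι (fun i => (h i).2)⟩

lemma mainBij
    (hXc : ∀ i x, dX (i + 1) (dX i x) = 0)
    (hXb : ∃ a b : ℤ, ∀ i, (i < a ∨ b < i) → Subsingleton (X i))
    (hXfree : ∀ i, Module.Free ℤ (X i))
    (hιchain : ∀ i y, ι (i + 1) (dY i y) = dI i (ι i y))
    (hιq : ∀ t, Function.Bijective (HdegMap dY dI ι hιchain t))
    (fF : ∀ t : ℤ, HomT X Y t →+ HomT X I t)
    (hfF : ∀ (t : ℤ) (ψ : HomT X Y t), fF t ψ = f0 ι t ψ)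
    (hchain : ∀ t x, fF (t + 1) (HomD X Y dX dY t x) = HomD X I dX dI t (fF t x))
    (n : ℤ) :
    Function.Bijective (HdegMap (HomD X Y dX dY) (HomD X I dX dI) fF hchain n) := by
  have memker : ∀ ψ : (HomD X Y dX dY n).ker, fF n ψ.1 ∈ (HomD X I dX dI n).ker := by
    intro ψ
    show HomD X I dX dI n (fF n ψ.1) = 0
    rw [← hchain n ψ.1, show HomD X Y dX dY n ψ.1 = 0 from ψ.2, map_zero]
  constructor
  · -- injectivity
    intro c₁ c₂ hcc
    obtain ⟨ψ₁, rfl⟩ := QuotientAddGroup.mk_surjective c₁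
    obtain ⟨ψ₂, rfl⟩ := QuotientAddGroup.mk_surjective c₂
    rw [HdegMap_mk _ _ _ _ _ _ (memker ψ₁), HdegMap_mk _ _ _ _ _ _ (memker ψ₂),
      hdeg_mk_eq] at hcc
    obtain ⟨ξ, hξ⟩ := hcc
    rw [hdeg_mk_eq]
    have hψd : HomD X Y dX dY n (-ψ₁.1 + ψ₂.1) = 0 := by
      rw [map_add, map_neg, show HomD X Y dX dY n ψ₁.1 = 0 from ψ₁.2,
        show HomD X Y dX dY n ψ₂.1 = 0 from ψ₂.2]
      simp
    have hξ' : castGrpHom (F := HomT X I) (show n - 1 + 1 = n by omega)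
        (HomD X I dX dI (n - 1) ξ) = f0 ι n (-ψ₁.1 + ψ₂.1) := by
      rw [← hfF n, map_add, map_neg, hξ]
    have hA' : HomD X Y dX dY (n - 1 + 1)
        (castGrpHom (F := HomT X Y) (show n = n - 1 + 1 by omega) (-ψ₁.1 + ψ₂.1)) = 0 := by
      rw [HomD_cg dX dY (show n = n - 1 + 1 by omega) (show n + 1 = n - 1 + 1 + 1 by omega),
        hψd, map_zero]
    have hB' : HomD X I dX dI (n - 1) ξ = f0 ι (n - 1 + 1)
        (castGrpHom (F := HomT X Y) (show n = n - 1 + 1 by omega) (-ψ₁.1 + ψ₂.1)) := by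
      rw [f0_cg ι (show n = n - 1 + 1 by omega), ← hξ',
        cg_cg _ _ (show n - 1 + 1 = n - 1 + 1 by omega), cg_self]
    obtain ⟨u, v, hu, -⟩ := ML dX dY dI ι hXc hXb hXfree hιchain hιq (n - 1)
      (castGrpHom (F := HomT X Y) (show n = n - 1 + 1 by omega) (-ψ₁.1 + ψ₂.1)) ξ hA' hB'
    refine ⟨u, ?_⟩
    rw [hu, cg_cg _ _ (show n = n by omega), cg_self]
  · -- surjectivity
    intro c
    obtain ⟨B, rfl⟩ := QuotientAddGroup.mk_surjective c
    have hB0 : HomD X I dX dI n B.1 = f0 ι (n + 1) (0 : HomT X Y (n + 1)) := by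
      rw [f0_zero, show HomD X I dX dI n B.1 = 0 from B.2]
    obtain ⟨u, v, hu, huv⟩ := ML dX dY dI ι hXc hXb hXfree hιchain hιq n 0 B.1
      (map_zero _) hB0
    have huk : u ∈ (HomD X Y dX dY n).ker := hu
    refine ⟨QuotientAddGroup.mk ⟨u, huk⟩, ?_⟩
    rw [HdegMap_mk _ _ _ _ _ _ (memker ⟨u, huk⟩), hdeg_mk_eq]
    refine ⟨v, ?_⟩
    show castGrpHom (F := HomT X I) (show n - 1 + 1 = n by omega)
        (HomD X I dX dI (n - 1) v) = -(fF n u) + B.1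
    rw [hfF n u, ← huv]
    exact (neg_add_cancel_left _ _).symm

end S13
end Aux13f
theorem discrete_rhom_agrees_with_internal_hom
    -- `X`: a bounded complex of finitely generated free abelian groups
    (X : ℤ → Type) [∀ i, AddCommGroup (X i)] (dX : ∀ i : ℤ, X i →+ X (i + 1))
    (hXc : ∀ i x, dX (i + 1) (dX i x) = 0)
    (hXb : ∃ a b : ℤ, ∀ i, (i < a ∨ b < i) → Subsingleton (X i))
    (hXfree : ∀ i, Module.Free ℤ (X i)) (hXfg : ∀ i, Module.Finite ℤ (X i))
    -- `Y`: a bounded complex of finitely generated abelian groups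
    (Y : ℤ → Type) [∀ i, AddCommGroup (Y i)] (dY : ∀ i : ℤ, Y i →+ Y (i + 1))
    (hYc : ∀ i y, dY (i + 1) (dY i y) = 0)
    (hYb : ∃ a b : ℤ, ∀ i, (i < a ∨ b < i) → Subsingleton (Y i))
    (hYfg : ∀ i, Module.Finite ℤ (Y i))
    -- `I`: a bounded complex of divisible locally compact abelian groups
    (I : ℤ → Type) [∀ i, AddCommGroup (I i)] [∀ i, TopologicalSpace (I i)]
    [∀ i, IsTopologicalAddGroup (I i)] [∀ i, LocallyCompactSpace (I i)]
    [∀ i, T2Space (I i)]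
    (dI : ∀ i : ℤ, ContinuousAddMonoidHom (I i) (I (i + 1)))
    (hIc : ∀ i x, dI (i + 1) (dI i x) = 0)
    (hIb : ∃ a b : ℤ, ∀ i, (i < a ∨ b < i) → Subsingleton (I i))
    (hIdiv : ∀ (i : ℤ) (m : ℤ), m ≠ 0 → Function.Surjective (fun x : I i => m • x))
    -- `ι : iY → I` a (strict) quasi-isomorphism, exhibiting `I` as a
    -- resolution of `iY` by divisible locally compact groups
    (ι : ∀ i, Y i →+ I i)
    (hιchain : ∀ i y, ι (i + 1) (dY i y) = dI i (ι i y))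
    (hιq : ∀ n, Function.Bijective
      (HdegMap dY (fun i => (dI i).toAddMonoidHom) ι hιchain n)) :
    -- the canonical postcomposition map
    -- `Hom^•(X, Y) = i RHom(X,Y) → Hom^•(iX, I) = R𝐻𝑜𝑚(iX, iY)`
    -- is a quasi-isomorphism
    ∀ (hcomm : ∀ (n : ℤ) (φ : HomT X Y n) (i : ℤ),
        (fun (m : ℤ) (ψ : HomT X Y m) (j : ℤ) => (ι (j + m)).comp (ψ j))
          (n + 1) (HomD X Y dX dY n φ) i =
        HomD X I dX (fun i => (dI i).toAddMonoidHom) n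
          ((fun (m : ℤ) (ψ : HomT X Y m) (j : ℤ) => (ι (j + m)).comp (ψ j)) n φ) i),
      ∀ n, Function.Bijective
        (HdegMap (HomD X Y dX dY) (HomD X I dX (fun i => (dI i).toAddMonoidHom))
          (fun m => AddMonoidHom.mk'
            (fun ψ (j : ℤ) => (ι (j + m)).comp (ψ j))
            (by
              intro ψ ψ'
              funext j
              ext x
              simp [AddMonoidHom.add_apply, Pi.add_apply]))
          (fun n φ => funext fun i => hcomm n φ i) n) := by
  intro hcomm n
  exact S13.mainBij dX dY (fun i => (dI i).toAddMonoidHom) ι hXc hXb hXfree hιchain hιq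
    (fun m => AddMonoidHom.mk'
      (fun ψ (j : ℤ) => (ι (j + m)).comp (ψ j))
      (by
        intro ψ ψ'
        funext j
        ext x
        simp [AddMonoidHom.add_apply, Pi.add_apply]))
    (fun t ψ => rfl)
    (fun n φ => funext fun i => hcomm n φ i) n
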